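/- Let d ≥ 5 and let t > 0 be such that λ = t² is a positive integer. Then |S_t^{d-1} ∩ ℤ^d| ≤ |B_t²(d) ∩ ℤ^d| ≤ (2t+1)⁴ |S_t^{d-1} ∩ ℤ^d|. -/
import Mathlib

/-- For `d ≥ 5` and `λ = t² ∈ ℕ`, `λ ≥ 1`, with `t = √λ`:
`|S_t^{d-1} ∩ ℤ^d| ≤ |B_t²(d) ∩ ℤ^d| ≤ (2t+1)⁴ |S_t^{d-1} ∩ ℤ^d|`. -/
theorem sphere_ball_card_comparison (d lam : ℕ) (hd : 5 ≤ d) (hlam : 1 ≤ lam) :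
    ({x : Fin d → ℤ | ∑ j, (x j) ^ 2 = (lam : ℤ)}.ncard : ℝ) ≤
        {x : Fin d → ℤ | ∑ j, (x j) ^ 2 ≤ (lam : ℤ)}.ncard ∧
      ({x : Fin d → ℤ | ∑ j, (x j) ^ 2 ≤ (lam : ℤ)}.ncard : ℝ) ≤
        (2 * Real.sqrt lam + 1) ^ 4 *
          {x : Fin d → ℤ | ∑ j, (x j) ^ 2 = (lam : ℤ)}.ncard := by
  classical
  set S := {x : Fin d → ℤ | ∑ j, (x j) ^ 2 = (lam : ℤ)} with hSdef
  set B := {x : Fin d → ℤ | ∑ j, (x j) ^ 2 ≤ (lam : ℤ)} with hBdef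
  have hsq_le : ∀ x : Fin d → ℤ, x ∈ B → ∀ j : Fin d, (x j) ^ 2 ≤ (lam : ℤ) := by
    intro x hx j
    exact le_trans (Finset.single_le_sum (fun i _ => sq_nonneg (x i)) (Finset.mem_univ j)) hx
  have hBsub : B ⊆ Set.pi Set.univ (fun _ : Fin d => Set.Icc (-(lam : ℤ)) (lam : ℤ)) := by
    intro x hx j _
    have h1 : (x j) ^ 2 ≤ (lam : ℤ) := hsq_le x hx j
    have h2 : |x j| ≤ (lam : ℤ) := by
      calc |x j| ≤ |x j| ^ 2 := Int.le_self_sq _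
        _ = (x j) ^ 2 := sq_abs _
        _ ≤ (lam : ℤ) := h1
    exact Set.mem_Icc.mpr (abs_le.mp h2)
  have hBfin : B.Finite :=
    Set.Finite.subset (Set.Finite.pi fun _ => Set.finite_Icc _ _) hBsub
  have hSsubB : S ⊆ B := fun x hx => le_of_eq hx
  have hSfin : S.Finite := hBfin.subset hSsubB
  constructor
  · exact_mod_cast Set.ncard_le_ncard hSsubB hBfin
  · set k := Nat.sqrt lam with hk
    have h4d : (4 : ℕ) ≤ d := by omega
    -- key: every ball point can be modified on the first 4 coordinates to land on the sphere
    have key : ∀ x, x ∈ B → ∃ y, y ∈ S ∧ ∀ j : Fin d, ¬((j : ℕ) < 4) → y j = x j := by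
      intro x hx
      set tail : ℤ :=
        ∑ j ∈ Finset.univ.filter (fun j : Fin d => ¬((j : ℕ) < 4)), (x j) ^ 2 with htail
      have hsplit :
          (∑ j ∈ Finset.univ.filter (fun j : Fin d => ((j : ℕ) < 4)), (x j) ^ 2) + tail
            = ∑ j, (x j) ^ 2 := Finset.sum_filter_add_sum_filter_not _ _ _
      have htail0 : 0 ≤ tail := Finset.sum_nonneg fun i _ => sq_nonneg _
      have hhead0 :
          0 ≤ ∑ j ∈ Finset.univ.filter (fun j : Fin d => ((j : ℕ) < 4)), (x j) ^ 2 :=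
        Finset.sum_nonneg fun i _ => sq_nonneg _
      have hxB : ∑ j, (x j) ^ 2 ≤ (lam : ℤ) := hx
      have htaille : tail ≤ (lam : ℤ) := by linarith
      obtain ⟨a, b, c, e, habcd⟩ := Nat.sum_four_squares ((lam : ℤ) - tail).toNat
      have hn : (a : ℤ) ^ 2 + (b : ℤ) ^ 2 + (c : ℤ) ^ 2 + (e : ℤ) ^ 2 = (lam : ℤ) - tail := by
        have h0 : (0 : ℤ) ≤ (lam : ℤ) - tail := by linarith
        calc (a : ℤ) ^ 2 + (b : ℤ) ^ 2 + (c : ℤ) ^ 2 + (e : ℤ) ^ 2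
            = ((a ^ 2 + b ^ 2 + c ^ 2 + e ^ 2 : ℕ) : ℤ) := by push_cast; ring
          _ = ((((lam : ℤ) - tail).toNat : ℕ) : ℤ) := by rw [habcd]
          _ = (lam : ℤ) - tail := Int.toNat_of_nonneg h0
      set v : Fin 4 → ℤ := ![(a : ℤ), (b : ℤ), (c : ℤ), (e : ℤ)] with hv
      set y : Fin d → ℤ :=
        fun j => if h : (j : ℕ) < 4 then v ⟨(j : ℕ), h⟩ else x j with hy
      have hytail : ∀ j : Fin d, ¬((j : ℕ) < 4) → y j = x j := by
        intro j hj; simp only [hy, dif_neg hj]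
      refine ⟨y, ?_, hytail⟩
      have h1 :
          ∑ j ∈ Finset.univ.filter (fun j : Fin d => ¬((j : ℕ) < 4)), (y j) ^ 2 = tail := by
        refine Finset.sum_congr rfl ?_
        intro j hj
        rw [Finset.mem_filter] at hj
        rw [hytail j hj.2]
      have h2 :
          ∑ j ∈ Finset.univ.filter (fun j : Fin d => ((j : ℕ) < 4)), (y j) ^ 2
            = ∑ i : Fin 4, (v i) ^ 2 := by
        refine Finset.sum_nbij'
          (i := fun j : Fin d => (⟨(j : ℕ) % 4, Nat.mod_lt _ (by norm_num)⟩ : Fin 4))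
          (j := fun i : Fin 4 => Fin.castLE h4d i) ?_ ?_ ?_ ?_ ?_
        · intro a _; exact Finset.mem_univ _
        · intro a _
          rw [Finset.mem_filter]
          exact ⟨Finset.mem_univ _, a.isLt⟩
        · intro a ha
          rw [Finset.mem_filter] at ha
          exact Fin.ext (by simp [Nat.mod_eq_of_lt ha.2])
        · intro a _
          exact Fin.ext (by simp [Nat.mod_eq_of_lt a.isLt])
        · intro j hj
          rw [Finset.mem_filter] at hj
          have hje : y j = v ⟨(j : ℕ) % 4, Nat.mod_lt _ (by norm_num)⟩ := by
            rw [hy]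
            simp only [dif_pos hj.2]
            congr 1
            exact Fin.ext (by simp [Nat.mod_eq_of_lt hj.2])
          rw [hje]
      have h3 : ∑ i : Fin 4, (v i) ^ 2 = (lam : ℤ) - tail := by
        rw [Fin.sum_univ_four]
        simpa [hv] using hn
      show ∑ j, (y j) ^ 2 = (lam : ℤ)
      rw [← Finset.sum_filter_add_sum_filter_not Finset.univ (fun j : Fin d => ((j : ℕ) < 4))
        (fun j => (y j) ^ 2), h1, h2, h3]
      ring
    choose g hgS hgtail using key
    -- the injection into sphere × box
    set f : (Fin d → ℤ) → (Fin d → ℤ) × (Fin 4 → ℤ) :=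
      fun x => (if hx : x ∈ B then g x hx else x, fun i => x (Fin.castLE h4d i)) with hf
    set T : Set ((Fin d → ℤ) × (Fin 4 → ℤ)) :=
      S ×ˢ (Set.pi Set.univ fun _ : Fin 4 => Set.Icc (-(k : ℤ)) (k : ℤ)) with hT
    have hmaps : ∀ x ∈ B, f x ∈ T := by
      intro x hx
      refine Set.mem_prod.mpr ⟨?_, ?_⟩
      · simp only [hf, dif_pos hx]
        exact hgS x hx
      · intro i _
        have h1 : (x (Fin.castLE h4d i)) ^ 2 ≤ (lam : ℤ) := hsq_le x hx _
        have h2 : ((x (Fin.castLE h4d i)).natAbs) ^ 2 ≤ lam := by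
          have : ((x (Fin.castLE h4d i)).natAbs : ℤ) ^ 2 ≤ (lam : ℤ) := by
            rw [Int.natCast_natAbs, sq_abs]; exact h1
          exact_mod_cast this
        have h3 : (x (Fin.castLE h4d i)).natAbs ≤ k := Nat.le_sqrt'.mpr h2
        have h4 : |x (Fin.castLE h4d i)| ≤ (k : ℤ) := by
          rw [← Int.natCast_natAbs]; exact_mod_cast h3
        exact Set.mem_Icc.mpr (abs_le.mp h4)
    have hinj : Set.InjOn f B := by
      intro x hx x' hx' hfe
      have h1 : g x hx = g x' hx' := by
        simpa only [hf, dif_pos hx, dif_pos hx'] using congrArg Prod.fst hfe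
      have h2 : ∀ i : Fin 4, x (Fin.castLE h4d i) = x' (Fin.castLE h4d i) := fun i =>
        congrFun (congrArg Prod.snd hfe) i
      funext j
      by_cases hj : (j : ℕ) < 4
      · have hcst : Fin.castLE h4d (⟨(j : ℕ), hj⟩ : Fin 4) = j := Fin.ext rfl
        have := h2 ⟨(j : ℕ), hj⟩
        rwa [hcst] at this
      · rw [← hgtail x hx j hj, ← hgtail x' hx' j hj, h1]
    have hTfin : T.Finite :=
      Set.Finite.prod hSfin (Set.Finite.pi fun _ => Set.finite_Icc _ _)
    have hcard : B.ncard ≤ T.ncard := Set.ncard_le_ncard_of_injOn f hmaps hinj hTfin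
    have hIcc : Nat.card (Set.Icc (-(k : ℤ)) (k : ℤ)) = 2 * k + 1 := by
      rw [Nat.card_coe_set_eq, ← Finset.coe_Icc, Set.ncard_coe_finset, Int.card_Icc]
      omega
    have hTcard : T.ncard = S.ncard * (2 * k + 1) ^ 4 := by
      rw [hT, ← Nat.card_coe_set_eq, Nat.card_congr (Equiv.Set.prod _ _), Nat.card_prod,
        Nat.card_coe_set_eq, Nat.card_congr (Equiv.Set.univPi _), Nat.card_pi]
      simp only [hIcc, Finset.prod_const, Finset.card_univ, Fintype.card_fin]
    have hksqrt : (k : ℝ) ≤ Real.sqrt lam := by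
      rw [Real.le_sqrt (by positivity) (by positivity)]
      exact_mod_cast Nat.sqrt_le' lam
    calc (B.ncard : ℝ) ≤ (T.ncard : ℝ) := Nat.cast_le.mpr hcard
      _ = (S.ncard : ℝ) * (2 * (k : ℝ) + 1) ^ 4 := by rw [hTcard]; push_cast; ring
      _ ≤ (2 * Real.sqrt lam + 1) ^ 4 * S.ncard := by
          rw [mul_comm]
          gcongr
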